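/- Let b : Fin 6 → ℝ be the bandwidths b 0 = b 1 = 7/20, b 2 = b 3 = 9/20 and b 4 = b 5 = 1/5, and let r₁ : Fin 5 → Fin 2 be the assignment r₁ 0 = r₁ 1 = r₁ 4 = 0 and r₁ 2 = r₁ 3 = 1 of the first five flows. Then: (a) r₁ is feasible; (b) there exists a feasible assignment of all six flows; but (c) for every assignment r : Fin 5 → Fin 2 reachable from r₁ by single-flow reroute steps and every edge e : Fin 2, the extension of r that places flow 5 on edge e is not feasible. -/

import Mathlib

open Finset

/-- The load on edge `e`: the sum of the bandwidths of the flows assigned to `e`. -/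
noncomputable def load {ι : Type*} [Fintype ι] {m : ℕ} (b : ι → ℝ) (r : ι → Fin m)
    (e : Fin m) : ℝ :=
  ∑ i ∈ univ.filter (fun i => r i = e), b i

/-- An assignment is feasible if the load of every edge is at most the capacity 1. -/
def Feasible {ι : Type*} [Fintype ι] {m : ℕ} (b : ι → ℝ) (r : ι → Fin m) : Prop :=
  ∀ e, load b r e ≤ 1

/-- A single-flow reroute step: `r'` is feasible and differs from `r` at exactly one index. -/
def Step {ι : Type*} [Fintype ι] {m : ℕ} (b : ι → ℝ) (r r' : ι → Fin m) : Prop :=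
  Feasible b r' ∧ ∃! i, r' i ≠ r i

/-- `r'` is reachable from a feasible `r` by a sequence of single-flow reroute steps. -/
def Reachable {ι : Type*} [Fintype ι] {m : ℕ} (b : ι → ℝ) (r r' : ι → Fin m) : Prop :=
  Feasible b r ∧ Relation.ReflTransGen (Step b) r r'

/-- The bandwidths of the six flows. -/
noncomputable def b : Fin 6 → ℝ := ![7/20, 7/20, 9/20, 9/20, 1/5, 1/5]

/-- The bandwidths of the first five flows. -/
noncomputable def b5 : Fin 5 → ℝ := fun i => b i.castSucc

/-- The given assignment of the first five flows. -/
def r₁ : Fin 5 → Fin 2 := ![0, 0, 1, 1, 0]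

lemma b5_eq : b5 = ![7/20, 7/20, 9/20, 9/20, 1/5] := by
  funext i; fin_cases i <;> rfl

lemma bv0 : b 0 = 7/20 := rfl
lemma bv1 : b 1 = 7/20 := rfl
lemma bv2 : b 2 = 9/20 := rfl
lemma bv3 : b 3 = 9/20 := rfl
lemma bv4 : b 4 = 1/5 := rfl
lemma bv5 : b 5 = 1/5 := rfl

lemma no_step (r' : Fin 5 → Fin 2) : ¬ Step b5 r₁ r' := by
  rintro ⟨hfeas, i, hi, huniq⟩
  have key : ∀ j, j ≠ i → r' j = r₁ j := fun j hj => by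
    by_contra h; exact hj (huniq j h)
  have hicase : i = 0 ∨ i = 1 ∨ i = 2 ∨ i = 3 ∨ i = 4 := by omega
  simp only [r₁, Matrix.cons_val_zero, Matrix.cons_val_one, Matrix.head_cons] at hi
  rcases hicase with rfl | rfl | rfl | rfl | rfl
  · have h0 : r' 0 = 1 := by simp [r₁] at hi; omega
    have h1 := key 1 (by decide); have h2 := key 2 (by decide)
    have h3 := key 3 (by decide); have h4 := key 4 (by decide)
    simp [r₁] at h1 h2 h3 h4
    have := hfeas 1
    simp [load, Finset.sum_filter, Fin.sum_univ_five, h0, h1, h2, h3, h4, b5_eq] at this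
    norm_num at this
  · have h1 : r' 1 = 1 := by simp [r₁] at hi; omega
    have h0 := key 0 (by decide); have h2 := key 2 (by decide)
    have h3 := key 3 (by decide); have h4 := key 4 (by decide)
    simp [r₁] at h0 h2 h3 h4
    have := hfeas 1
    simp [load, Finset.sum_filter, Fin.sum_univ_five, h0, h1, h2, h3, h4, b5_eq] at this
    norm_num at this
  · have h2 : r' 2 = 0 := by simp [r₁] at hi; omega
    have h0 := key 0 (by decide); have h1 := key 1 (by decide)
    have h3 := key 3 (by decide); have h4 := key 4 (by decide)
    simp [r₁] at h0 h1 h3 h4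
    have := hfeas 0
    simp [load, Finset.sum_filter, Fin.sum_univ_five, h0, h1, h2, h3, h4, b5_eq] at this
    norm_num at this
  · have h3 : r' 3 = 0 := by simp [r₁] at hi; omega
    have h0 := key 0 (by decide); have h1 := key 1 (by decide)
    have h2 := key 2 (by decide); have h4 := key 4 (by decide)
    simp [r₁] at h0 h1 h2 h4
    have := hfeas 0
    simp [load, Finset.sum_filter, Fin.sum_univ_five, h0, h1, h2, h3, h4, b5_eq] at this
    norm_num at this
  · have h4 : r' 4 = 1 := by simp [r₁] at hi; omega
    have h0 := key 0 (by decide); have h1 := key 1 (by decide)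
    have h2 := key 2 (by decide); have h3 := key 3 (by decide)
    simp [r₁] at h0 h1 h2 h3
    have := hfeas 1
    simp [load, Finset.sum_filter, Fin.sum_univ_five, h0, h1, h2, h3, h4, b5_eq] at this
    norm_num at this

lemma reach_eq {r : Fin 5 → Fin 2} (h : Relation.ReflTransGen (Step b5) r₁ r) : r = r₁ := by
  induction h with
  | refl => rfl
  | tail _ h2 ih => subst ih; exact absurd h2 (no_step _)

theorem stmt5 :
    Feasible b5 r₁ ∧
    (∃ r : Fin 6 → Fin 2, Feasible b r) ∧
    ∀ r : Fin 5 → Fin 2, Reachable b5 r₁ r →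
      ∀ e : Fin 2, ¬ Feasible b (Fin.snoc r e) := by
  refine ⟨?_, ⟨![0, 1, 0, 1, 0, 1], ?_⟩, ?_⟩
  · intro e
    fin_cases e <;>
    · simp only [load, Finset.sum_filter, Fin.sum_univ_five, b5_eq]
      norm_num [show ((![0,0,1,1,0] : Fin 5 → Fin 2) 0) = 0 from rfl,
        show ((![0,0,1,1,0] : Fin 5 → Fin 2) 1) = 0 from rfl,
        show ((![0,0,1,1,0] : Fin 5 → Fin 2) 2) = 1 from rfl,
        show ((![0,0,1,1,0] : Fin 5 → Fin 2) 3) = 1 from rfl,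
        show ((![0,0,1,1,0] : Fin 5 → Fin 2) 4) = 0 from rfl, r₁,
        show ((![7/20, 7/20, 9/20, 9/20, 1/5] : Fin 5 → ℝ) 2) = 9/20 from rfl,
        show ((![7/20, 7/20, 9/20, 9/20, 1/5] : Fin 5 → ℝ) 3) = 9/20 from rfl,
        show ((![7/20, 7/20, 9/20, 9/20, 1/5] : Fin 5 → ℝ) 4) = 1/5 from rfl]
  · intro e
    fin_cases e <;>
    · simp only [load, Finset.sum_filter, Fin.sum_univ_six, bv0, bv1, bv2, bv3, bv4, bv5]
      norm_num [show ((![0,1,0,1,0,1] : Fin 6 → Fin 2) 0) = 0 from rfl,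
        show ((![0,1,0,1,0,1] : Fin 6 → Fin 2) 1) = 1 from rfl,
        show ((![0,1,0,1,0,1] : Fin 6 → Fin 2) 2) = 0 from rfl,
        show ((![0,1,0,1,0,1] : Fin 6 → Fin 2) 3) = 1 from rfl,
        show ((![0,1,0,1,0,1] : Fin 6 → Fin 2) 4) = 0 from rfl,
        show ((![0,1,0,1,0,1] : Fin 6 → Fin 2) 5) = 1 from rfl]
  · rintro r ⟨-, hrt⟩ e hf
    rw [reach_eq hrt] at hf
    have hs : (Fin.snoc r₁ e : Fin 6 → Fin 2) = ![0, 0, 1, 1, 0, e] := by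
      funext j; fin_cases j <;> rfl
    rw [hs] at hf
    fin_cases e
    · have := hf 0
      simp only [load, Finset.sum_filter, Fin.sum_univ_six, bv0, bv1, bv2, bv3, bv4, bv5] at this
      norm_num [show ((![0,0,1,1,0,0] : Fin 6 → Fin 2) 0) = 0 from rfl,
        show ((![0,0,1,1,0,0] : Fin 6 → Fin 2) 1) = 0 from rfl,
        show ((![0,0,1,1,0,0] : Fin 6 → Fin 2) 2) = 1 from rfl,
        show ((![0,0,1,1,0,0] : Fin 6 → Fin 2) 3) = 1 from rfl,
        show ((![0,0,1,1,0,0] : Fin 6 → Fin 2) 4) = 0 from rfl,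
        show ((![0,0,1,1,0,0] : Fin 6 → Fin 2) 5) = 0 from rfl] at this
    · have := hf 1
      simp only [load, Finset.sum_filter, Fin.sum_univ_six, bv0, bv1, bv2, bv3, bv4, bv5] at this
      norm_num [show ((![0,0,1,1,0,1] : Fin 6 → Fin 2) 0) = 0 from rfl,
        show ((![0,0,1,1,0,1] : Fin 6 → Fin 2) 1) = 0 from rfl,
        show ((![0,0,1,1,0,1] : Fin 6 → Fin 2) 2) = 1 from rfl,
        show ((![0,0,1,1,0,1] : Fin 6 → Fin 2) 3) = 1 from rfl,
        show ((![0,0,1,1,0,1] : Fin 6 → Fin 2) 4) = 0 from rfl,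
        show ((![0,0,1,1,0,1] : Fin 6 → Fin 2) 5) = 1 from rfl] at this
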